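/- Let L be a finite lattice whose Möbius function is nonvanishing (μ(x,y) ≠ 0 for all x ≤ y), let F ⊆ L, and suppose z ∈ L is not shattered by F. Then there exist coefficients γ_y ∈ ℚ, indexed by y < z, such that for all p ∈ F, χ_z(p) = Σ_{y<z} γ_y χ_y(p), where χ_x(p) = 1 if p ≥ x and 0 otherwise. -/

import Mathlib

open scoped Classical

/-- `F` shatters `z`: for every `x ≤ z` there is `w ∈ F` with `w ⊓ z = x`. -/
def Shatters {L : Type*} [SemilatticeInf L] (F : Set L) (z : L) : Prop :=
  ∀ x ≤ z, ∃ w ∈ F, w ⊓ z = x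

/-- The set of elements shattered by `F`. -/
def Str {L : Type*} [SemilatticeInf L] (F : Set L) : Set L := {z | Shatters F z}


/-- The Möbius function of a finite poset. -/
noncomputable def mu {L : Type*} [PartialOrder L] [Fintype L] (x y : L) : ℚ :=
  if x = y then 1
  else if x ≤ y then
    - ∑ z ∈ (Finset.univ.filter fun z => x ≤ z ∧ z < y).attach, mu x z.1
  else 0
termination_by (Finset.univ.filter fun z : L => z < y).card
decreasing_by
  · have hz := (Finset.mem_filter.mp z.2).2.2
    apply Finset.card_lt_card
    constructor
    · intro w hw
      simp only [Finset.mem_filter, Finset.mem_univ, true_and] at hw ⊢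
      exact hw.trans hz
    · intro hsub
      have hmem : z.1 ∈ Finset.univ.filter fun w : L => w < y := by simp [hz]
      have := hsub hmem
      simp at this

lemma mu_self {L : Type*} [PartialOrder L] [Fintype L] (x : L) : mu x x = 1 := by
  rw [mu]; simp

lemma mu_lt {L : Type*} [PartialOrder L] [Fintype L] {x y : L} (h : x < y) :
    mu x y = - ∑ w ∈ Finset.univ.filter fun w => x ≤ w ∧ w < y, mu x w := by
  rw [mu, if_neg h.ne, if_pos h.le, Finset.sum_attach]

lemma insert_split {L : Type*} [PartialOrder L] [Fintype L] {x m : L} (h : x ≤ m) :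
    (Finset.univ.filter fun y => x ≤ y ∧ y ≤ m) =
      insert m (Finset.univ.filter fun y => x ≤ y ∧ y < m) := by
  ext y
  simp only [Finset.mem_insert, Finset.mem_filter, Finset.mem_univ, true_and]
  constructor
  · rintro ⟨h1, h2⟩
    rcases eq_or_lt_of_le h2 with rfl | h3
    · exact Or.inl rfl
    · exact Or.inr ⟨h1, h3⟩
  · rintro (rfl | ⟨h1, h2⟩)
    · exact ⟨h, le_refl _⟩
    · exact ⟨h1, h2.le⟩

lemma mu_sum {L : Type*} [PartialOrder L] [Fintype L] {x m : L} (h : x ≤ m) :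
    ∑ y ∈ Finset.univ.filter (fun y => x ≤ y ∧ y ≤ m), mu x y
      = if x = m then 1 else 0 := by
  rcases eq_or_lt_of_le h with rfl | hlt
  · have hs : (Finset.univ.filter fun y => x ≤ y ∧ y ≤ x) = {x} := by
      ext y
      simp only [Finset.mem_filter, Finset.mem_univ, true_and, Finset.mem_singleton]
      constructor
      · rintro ⟨h1, h2⟩; exact le_antisymm h2 h1
      · rintro rfl; exact ⟨le_refl _, le_refl _⟩
    rw [hs]; simp [mu_self]
  · rw [if_neg hlt.ne, insert_split hlt.le, Finset.sum_insert (by simp), mu_lt hlt]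
    ring

/-- If the Möbius function of `L` is nonvanishing and `z` is not shattered by `F`,
then `χ_z` restricted to `F` is a linear combination of `χ_y` for `y < z`. -/
theorem elimination {L : Type*} [Lattice L] [Fintype L]
    (hmu : ∀ x y : L, x ≤ y → mu x y ≠ 0)
    (F : Set L) (z : L) (hz : ¬ Shatters F z) :
    ∃ γ : L → ℚ, ∀ p ∈ F,
      (if z ≤ p then (1 : ℚ) else 0) =
        ∑ y ∈ Finset.univ.filter fun y : L => y < z,
          γ y * (if y ≤ p then (1 : ℚ) else 0) := by
  simp only [Shatters, not_forall] at hz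
  obtain ⟨x, hxz, hx⟩ := hz
  push_neg at hx
  set c := mu x z with hc
  have hc0 : c ≠ 0 := hmu x z hxz
  refine ⟨fun y => if x ≤ y then -(mu x y) / c else 0, fun p hp => ?_⟩
  have hS : ∑ y ∈ Finset.univ.filter (fun y => x ≤ y ∧ y ≤ z),
      mu x y * (if y ≤ p then (1 : ℚ) else 0) = 0 := by
    have h1 : ∀ y : L, mu x y * (if y ≤ p then (1 : ℚ) else 0)
        = if y ≤ p then mu x y else 0 := by
      intro y; split <;> ring
    simp only [h1]
    rw [← Finset.sum_filter]
    have h2 : (Finset.univ.filter fun y => x ≤ y ∧ y ≤ z).filter (fun y => y ≤ p)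
        = Finset.univ.filter fun y => x ≤ y ∧ y ≤ p ⊓ z := by
      ext y
      simp only [Finset.mem_filter, Finset.mem_univ, true_and, le_inf_iff]
      tauto
    rw [h2]
    by_cases hxp : x ≤ p ⊓ z
    · rw [mu_sum hxp, if_neg]
      intro h
      exact hx p hp h.symm
    · rw [Finset.filter_eq_empty_iff.mpr, Finset.sum_empty]
      rintro y - ⟨h1y, h2y⟩
      exact hxp (h1y.trans h2y)
  rw [insert_split hxz, Finset.sum_insert (by simp)] at hS
  have hrhs : ∑ y ∈ Finset.univ.filter (fun y : L => y < z),
      (if x ≤ y then -(mu x y) / c else 0) * (if y ≤ p then (1 : ℚ) else 0)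
      = ∑ y ∈ Finset.univ.filter (fun y => x ≤ y ∧ y < z),
          (-(mu x y) / c) * (if y ≤ p then (1 : ℚ) else 0) := by
    rw [Finset.sum_filter, Finset.sum_filter]
    apply Finset.sum_congr rfl
    intro y _
    by_cases h1 : x ≤ y <;> by_cases h2 : y < z <;> simp [h1, h2]
  rw [hrhs]
  have : ∑ y ∈ Finset.univ.filter (fun y => x ≤ y ∧ y < z),
      (-(mu x y) / c) * (if y ≤ p then (1 : ℚ) else 0)
      = (-(1:ℚ)/c) * ∑ y ∈ Finset.univ.filter (fun y => x ≤ y ∧ y < z),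
          mu x y * (if y ≤ p then (1 : ℚ) else 0) := by
    rw [Finset.mul_sum]
    apply Finset.sum_congr rfl
    intro y _
    ring
  rw [this]
  have hsum := hS
  have : ∑ y ∈ Finset.univ.filter (fun y => x ≤ y ∧ y < z),
      mu x y * (if y ≤ p then (1 : ℚ) else 0)
      = - (c * (if z ≤ p then (1 : ℚ) else 0)) := by linarith
  rw [this]
  field_simp
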